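/- (Gordan's Lemma) Let v₁, …, v_k be vectors in ℤⁿ and let σ = {x ∈ ℝⁿ | ∀ i, ⟪vᵢ, x⟫ ≥ 0} be the rational polyhedral cone they cut out. Then the additive monoid of lattice points of σ, namely {x : Fin n → ℤ | ∀ i, ∑ j, (vᵢ j) * (x j) ≥ 0}, is a finitely generated additive monoid. -/

import Mathlib

/-- Core combinatorial lemma (Dickson-type): a "saturated" submonoid of `ι → ℕ`
is finitely generated. -/
lemma core_fg {ι : Type} [Fintype ι] (P : AddSubmonoid (ι → ℕ))
    (hP : ∀ a ∈ P, ∀ b ∈ P, a ≤ b → b - a ∈ P) : P.FG := by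
  classical
  set S : Set (ι → ℕ) := {a | a ∈ P ∧ a ≠ 0 ∧ ∀ b ∈ P, b ≠ 0 → b ≤ a → b = a} with hS
  have hanti : IsAntichain (· ≤ ·) S := by
    intro a ha b hb hne hle
    exact hne (hb.2.2 a ha.1 ha.2.1 hle)
  have hfin : S.Finite := by
    have h : ∀ _i : ι, IsWellOrder ℕ (· < ·) := fun _ => inferInstance
    exact hanti.finite_of_partiallyWellOrderedOn (Set.isPWO_of_wellQuasiOrderedLE S)
  have hsum_eq : ∀ c b : ι → ℕ, c ≤ b → (∑ i, c i) = (∑ i, b i) → c = b := by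
    intro c b hle hsum
    funext i
    by_contra h
    have hi : c i < b i := lt_of_le_of_ne (hle i) h
    have : (∑ i, c i) < ∑ i, b i :=
      Finset.sum_lt_sum (fun j _ => hle j) ⟨i, Finset.mem_univ i, hi⟩
    omega
  have hzero : ∀ b : ι → ℕ, (∑ i, b i) = 0 → b = 0 := by
    intro b hb
    funext i
    have := (Finset.sum_eq_zero_iff.mp hb) i (Finset.mem_univ i)
    simpa using this
  have key : ∀ N : ℕ, ∀ a ∈ P, (∑ i, a i) ≤ N → a ∈ AddSubmonoid.closure S := by
    intro N
    induction N with
    | zero =>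
      intro a _ hsum
      have : a = 0 := hzero a (Nat.le_zero.mp hsum)
      rw [this]; exact zero_mem _
    | succ N ih =>
      intro a haP hsum
      by_cases ha0 : a = 0
      · rw [ha0]; exact zero_mem _
      · set T : Set ℕ := {s | ∃ b, b ∈ P ∧ b ≠ 0 ∧ b ≤ a ∧ (∑ i, b i) = s} with hT
        have hTne : T.Nonempty := ⟨∑ i, a i, a, haP, ha0, le_refl a, rfl⟩
        obtain ⟨b, hbP, hb0, hba, hbsum⟩ := Nat.sInf_mem hTne
        have hbmin : ∀ c ∈ P, c ≠ 0 → c ≤ b → c = b := by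
          intro c hcP hc0 hcb
          have hcT : (∑ i, c i) ∈ T := ⟨c, hcP, hc0, le_trans hcb hba, rfl⟩
          have h1 := Nat.sInf_le hcT
          have h2 : (∑ i, c i) ≤ ∑ i, b i := Finset.sum_le_sum fun i _ => hcb i
          exact hsum_eq c b hcb (by omega)
        have hbS : b ∈ S := ⟨hbP, hb0, hbmin⟩
        have hab : a - b ∈ P := hP b hbP a haP hba
        have hbpos : 0 < ∑ i, b i := by
          rcases Nat.eq_zero_or_pos (∑ i, b i) with h | h
          · exact absurd (hzero b h) hb0
          · exact h
        have hsub_sum : (∑ i, (a - b) i) + ∑ i, b i = ∑ i, a i := by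
          rw [← Finset.sum_add_distrib]
          exact Finset.sum_congr rfl fun i _ => by
            simp [Pi.sub_apply, Nat.sub_add_cancel (hba i)]
        have hN : (∑ i, (a - b) i) ≤ N := by
          have h1 := hsub_sum
          have h2 := hbpos
          have h3 := hsum
          omega
        have ihab : a - b ∈ AddSubmonoid.closure S := ih (a - b) hab hN
        have hsplit : a = b + (a - b) := by
          funext i
          have hle : b i ≤ a i := hba i
          simp only [Pi.add_apply, Pi.sub_apply]
          omega
        rw [hsplit]
        exact add_mem (AddSubmonoid.subset_closure hbS) ihab
  rw [AddSubmonoid.fg_iff]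
  refine ⟨S, le_antisymm ?_ ?_, hfin⟩
  · exact (AddSubmonoid.closure_le).mpr fun a ha => ha.1
  · exact fun a ha => key (∑ i, a i) a ha le_rfl

/-- Lemma 2.2 (Gordan's Lemma): the monoid of lattice points of a rational
polyhedral cone is a finitely generated additive monoid. -/
theorem gordan_lemma (n k : ℕ) (v : Fin k → Fin n → ℤ)
    (M : AddSubmonoid (Fin n → ℤ))
    (hM : (M : Set (Fin n → ℤ)) = {x : Fin n → ℤ | ∀ i, 0 ≤ ∑ j, v i j * x j}) :
    M.FG := by
  classical
  have hMx : ∀ x : Fin n → ℤ, x ∈ M ↔ ∀ i, 0 ≤ ∑ j, v i j * x j := by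
    intro x
    rw [← SetLike.mem_coe, hM]
    rfl
  set ι := (Fin n ⊕ (Fin n ⊕ Fin k)) with hι
  -- the linear forms
  set L : (Fin n → ℤ) → Fin k → ℤ := fun x i => ∑ j, v i j * x j with hL
  have hLadd : ∀ x y : Fin n → ℤ, ∀ i, L (x + y) i = L x i + L y i := by
    intro x y i
    simp only [hL, Pi.add_apply, mul_add]
    exact Finset.sum_add_distrib
  -- the projection hom
  set φ : (ι → ℕ) →+ (Fin n → ℤ) :=
    { toFun := fun w j => (w (.inl j) : ℤ) - (w (.inr (.inl j)) : ℤ)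
      map_zero' := by funext j; simp
      map_add' := by intro a b; funext j; simp; ring } with hφ
  -- the saturated cone upstairs
  set Q : AddSubmonoid (ι → ℕ) :=
    { carrier := {w | ∀ i, L (φ w) i = (w (.inr (.inr i)) : ℤ)}
      zero_mem' := by
        intro i
        simp [hL]
      add_mem' := by
        intro a b ha hb i
        rw [map_add, hLadd, ha i, hb i]
        simp [Pi.add_apply] } with hQ
  have hsat : ∀ a ∈ Q, ∀ b ∈ Q, a ≤ b → b - a ∈ Q := by
    intro a ha b hb hab
    intro i
    have hφsub : φ (b - a) = φ b - φ a := by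
      funext j
      simp only [hφ, AddMonoidHom.coe_mk, ZeroHom.coe_mk, Pi.sub_apply]
      have h1 := hab (Sum.inl j)
      have h2 := hab (Sum.inr (Sum.inl j))
      push_cast [Nat.cast_sub h1, Nat.cast_sub h2]
      ring
    have hLsub : ∀ x y : Fin n → ℤ, ∀ i, L (x - y) i = L x i - L y i := by
      intro x y i
      simp only [hL, Pi.sub_apply, mul_sub]
      exact Finset.sum_sub_distrib _ _
    rw [hφsub, hLsub, ha i, hb i]
    have h3 := hab (Sum.inr (Sum.inr i))
    simp [Pi.sub_apply, Nat.cast_sub h3]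
  have himg : M = Q.map φ := by
    ext x
    rw [hMx, AddSubmonoid.mem_map]
    constructor
    · intro hx
      refine ⟨fun u => Sum.rec (fun j => (x j).toNat)
        (Sum.rec (fun j => (-x j).toNat) (fun i => (L x i).toNat)) u, ?_, ?_⟩
      · intro i
        have hφw : (fun j => ((x j).toNat : ℤ) - ((-x j).toNat : ℤ)) = x := by
          funext j
          simp [Int.toNat_sub_toNat_neg]
        simp only [hQ, hφ, AddMonoidHom.coe_mk, ZeroHom.coe_mk]
        show L (fun j => ((x j).toNat : ℤ) - ((-x j).toNat : ℤ)) i = ((L x i).toNat : ℤ)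
        rw [hφw, Int.toNat_of_nonneg (hx i)]
      · funext j
        simp [hφ, Int.toNat_sub_toNat_neg]
    · rintro ⟨w, hw, rfl⟩
      intro i
      have := hw i
      rw [show (∑ j, v i j * φ w j) = L (φ w) i from rfl, this]
      positivity
  rw [himg]
  exact AddSubmonoid.FG.map (core_fg Q hsat) φ
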